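/- Let A be a finite alphabet and let w be an unbordered partial word of length n over A with exactly h holes. Then the set L↑(w) = {u ∈ Aⁿ : w ↑ u} is a cross-bifix-free code and |L↑(w)| = |A|^h. -/
import Mathlib


/-- The domain of a partial word (a list over `Option A`, where `none` is the hole):
the set of positions carrying a letter. -/
def PartialWord.domain {A : Type*} (w : List (Option A)) : Finset ℕ :=
  (Finset.range w.length).filter fun i => (w.getD i none).isSome

/-- Two partial words are compatible if they have the same length and agree on the
intersection of their domains. -/
def PartialWord.Compatible {A : Type*} (w v : List (Option A)) : Prop :=
  w.length = v.length ∧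
    ∀ i ∈ PartialWord.domain w ∩ PartialWord.domain v, w.getD i none = v.getD i none

/-- A partial word is unbordered if no nonempty proper prefix is compatible with a
suffix of the same length. -/
def PartialWord.Unbordered {A : Type*} (w : List (Option A)) : Prop :=
  ∀ x y : List (Option A), x <+: w → y <:+ w → x ≠ [] → x.length < w.length →
    x.length = y.length → ¬ PartialWord.Compatible x y

/-- The number of holes of a partial word. -/
def PartialWord.holes {A : Type*} (w : List (Option A)) : ℕ :=
  w.countP fun x => x.isNone

/-- `u` repeated `t` times. -/
def listPow {α : Type*} (u : List α) (t : ℕ) : List α := (List.replicate t u).flatten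

/-- A complete sparse ruler of length `n`. -/
def IsCompleteRuler (n : ℕ) (R : Finset ℕ) : Prop :=
  (∀ x ∈ R, x ≤ n) ∧ 0 ∈ R ∧ n ∈ R ∧ ∀ d ≤ n, ∃ r ∈ R, ∃ s ∈ R, r = s + d

/-- Minimum number of marks of a complete sparse ruler of length `n`. -/
noncomputable def M1 (n : ℕ) : ℕ :=
  sInf {k | ∃ R : Finset ℕ, IsCompleteRuler n R ∧ R.card = k}

/-- Maximum number of holes an unbordered partial word of length `n` over an alphabet
of size `k` can have. -/
noncomputable def HB (k n : ℕ) : ℕ :=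
  sSup {h | ∃ w : List (Option (Fin k)),
    w.length = n ∧ PartialWord.Unbordered w ∧ PartialWord.holes w = h}

/-- The ruler (set of partial sums) given by a difference representation. -/
def rulerOfDiffs (D : List ℕ) : Finset ℕ :=
  ((List.range (D.length + 1)).map fun t => (D.take t).sum).toFinset

/-- The difference representation of the extended Wichmann ruler `w₁(r,s,i,j)`. -/
def wichmannDiffs (r s i j : ℕ) : List ℕ :=
  List.replicate r 1 ++ [r + 1] ++ List.replicate r (2 * r + 1) ++
    List.replicate s (4 * r + 3) ++ List.replicate (r + 1) (2 * r + 2) ++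
    List.replicate r 1 ++ List.replicate i (r + 1) ++ [j]

/-- A complete two-dimensional sparse ruler: an `(n,m)`-ruler. -/
def IsRuler2 (n m : ℕ) (R : Finset (ℕ × ℕ)) : Prop :=
  (∀ p ∈ R, p.1 < n ∧ p.2 < m) ∧
    ∀ x y : ℤ, |x| ≤ (n : ℤ) - 1 → |y| ≤ (m : ℤ) - 1 →
      ∃ p ∈ R, ∃ q ∈ R, (p.1 : ℤ) - (q.1 : ℤ) = x ∧ (p.2 : ℤ) - (q.2 : ℤ) = y

/-- Minimum number of marks of an `(n,m)`-ruler. -/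
noncomputable def M2 (n m : ℕ) : ℕ :=
  sInf {k | ∃ R : Finset (ℕ × ℕ), IsRuler2 n m R ∧ R.card = k}

/-- The domain of an `n` by `m` two-dimensional partial word. -/
def domain2 {A : Type*} (n m : ℕ) (w : ℕ × ℕ → Option A) : Finset (ℕ × ℕ) :=
  (Finset.range n ×ˢ Finset.range m).filter fun p => (w p).isSome

/-- An `n` by `m` two-dimensional partial word is unbordered if its domain is an
`(n,m)`-ruler and every nonzero measurable vector can be measured between two
positions carrying distinct letters. -/
def Unbordered2 {A : Type*} (n m : ℕ) (w : ℕ × ℕ → Option A) : Prop :=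
  IsRuler2 n m (domain2 n m w) ∧
    ∀ x y : ℤ, |x| ≤ (n : ℤ) - 1 → |y| ≤ (m : ℤ) - 1 → ¬(x = 0 ∧ y = 0) →
      ∃ p ∈ domain2 n m w, ∃ q ∈ domain2 n m w,
        (p.1 : ℤ) - (q.1 : ℤ) = x ∧ (p.2 : ℤ) - (q.2 : ℤ) = y ∧ w p ≠ w q

/-- Number of holes of an `n` by `m` two-dimensional partial word. -/
def holes2 {A : Type*} (n m : ℕ) (w : ℕ × ℕ → Option A) : ℕ :=
  n * m - (domain2 n m w).card

/-- Maximum number of holes an unbordered `n` by `m` two-dimensional partial word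
over an alphabet of size `k` can have. -/
noncomputable def HB2 (k n m : ℕ) : ℕ :=
  sSup {h | ∃ w : ℕ × ℕ → Option (Fin k), Unbordered2 n m w ∧ holes2 n m w = h}

section Aux

variable {A : Type*}

lemma mem_domain_iff (w : List (Option A)) (i : ℕ) :
    i ∈ PartialWord.domain w ↔ i < w.length ∧ (w.getD i none).isSome := by
  simp [PartialWord.domain]

lemma lt_of_getD_eq_some {w : List (Option A)} {i : ℕ} {a : A}
    (h : w.getD i none = some a) : i < w.length := by
  by_contra hc
  push_neg at hc
  rw [List.getD_eq_getElem?_getD, List.getElem?_eq_none hc] at h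
  simp at h

lemma compat_iff (w v : List (Option A)) :
    PartialWord.Compatible w v ↔ w.length = v.length ∧
      ∀ i a b, w.getD i none = some a → v.getD i none = some b → a = b := by
  constructor
  · rintro ⟨hl, hc⟩
    refine ⟨hl, fun i a b ha hb => ?_⟩
    have hiw := lt_of_getD_eq_some ha
    have hiv := lt_of_getD_eq_some hb
    have := hc i (by
      rw [Finset.mem_inter, mem_domain_iff, mem_domain_iff, ha, hb]
      exact ⟨⟨hiw, rfl⟩, ⟨hiv, rfl⟩⟩)
    rw [ha, hb] at this
    exact Option.some_injective _ this
  · rintro ⟨hl, hc⟩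
    refine ⟨hl, fun i hi => ?_⟩
    rw [Finset.mem_inter, mem_domain_iff, mem_domain_iff] at hi
    obtain ⟨⟨_, hw⟩, ⟨_, hv⟩⟩ := hi
    obtain ⟨a, ha⟩ := Option.isSome_iff_exists.mp hw
    obtain ⟨b, hb⟩ := Option.isSome_iff_exists.mp hv
    rw [ha, hb, hc i a b ha hb]

lemma compat_cons {x y : Option A} {w v : List (Option A)} :
    PartialWord.Compatible (x :: w) (y :: v) ↔
      (∀ a b, x = some a → y = some b → a = b) ∧ PartialWord.Compatible w v := by
  simp only [compat_iff, List.length_cons]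
  constructor
  · rintro ⟨hl, h⟩
    refine ⟨fun a b ha hb =>
        h 0 a b (by rw [List.getD_cons_zero]; exact ha) (by rw [List.getD_cons_zero]; exact hb),
      by omega,
      fun i a b ha hb =>
        h (i + 1) a b (by rw [List.getD_cons_succ]; exact ha)
          (by rw [List.getD_cons_succ]; exact hb)⟩
  · rintro ⟨h0, hl, h⟩
    refine ⟨by omega, fun i a b ha hb => ?_⟩
    match i with
    | 0 =>
      rw [List.getD_cons_zero] at ha hb
      exact h0 a b ha hb
    | (i + 1) =>
      rw [List.getD_cons_succ] at ha hb
      exact h i a b ha hb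

lemma compat_map_some {w : List (Option A)} {u : List A}
    (h : PartialWord.Compatible w (u.map some)) {i : ℕ} {a : A}
    (hw : w.getD i none = some a) : u[i]? = some a := by
  have hiw := lt_of_getD_eq_some hw
  have hic : i < u.length := by
    have := h.1
    rw [List.length_map] at this
    omega
  have hv : (u.map some).getD i none = some u[i] := by
    rw [List.getD_eq_getElem?_getD, List.getElem?_map, List.getElem?_eq_getElem hic]
    rfl
  have := (compat_iff _ _).mp h |>.2 i a u[i] hw hv
  rw [List.getElem?_eq_getElem hic, this]

open Classical in
/-- The finset of full-word fillings of a partial word. -/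
noncomputable def fillings [Fintype A] : List (Option A) → Finset (List A)
  | [] => {[]}
  | some a :: w => (fillings w).image (a :: ·)
  | none :: w => Finset.univ.biUnion fun b => (fillings w).image (b :: ·)

lemma mem_fillings [Fintype A] (w : List (Option A)) (u : List A) :
    u ∈ fillings w ↔ u.length = w.length ∧ PartialWord.Compatible w (u.map some) := by
  classical
  induction w generalizing u with
  | nil =>
    simp only [fillings, Finset.mem_singleton, List.length_nil]
    constructor
    · rintro rfl
      exact ⟨rfl, ⟨by simp, by simp [PartialWord.domain]⟩⟩
    · rintro ⟨hl, _⟩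
      exact List.eq_nil_of_length_eq_zero hl
  | cons x w ih =>
    cases u with
    | nil =>
      constructor
      · intro hu
        exfalso
        cases x with
        | some a => simp [fillings] at hu
        | none => simp [fillings] at hu
      · rintro ⟨h, _⟩
        simp only [List.length_nil, List.length_cons] at h
        omega
    | cons a u =>
      have hmap : (a :: u).map some = some a :: u.map some := rfl
      cases x with
      | some b =>
        simp only [fillings, Finset.mem_image, hmap, compat_cons, List.length_cons]
        constructor
        · rintro ⟨v, hv, hve⟩
          injection hve with h1 h2
          rw [h2] at hv
          obtain ⟨hl, hc⟩ := (ih u).mp hv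
          refine ⟨by simpa using hl, fun p q hp hq => ?_, hc⟩
          injection hp with hp; injection hq with hq
          rw [← hp, ← hq]; exact h1
        · rintro ⟨hl, h0, hc⟩
          have hba : b = a := h0 b a rfl rfl
          subst hba
          exact ⟨u, (ih u).mpr ⟨by simpa using hl, hc⟩, rfl⟩
      | none =>
        simp only [fillings, Finset.mem_biUnion, Finset.mem_image, Finset.mem_univ,
          true_and, hmap, compat_cons, List.length_cons]
        constructor
        · rintro ⟨b, v, hv, hve⟩
          injection hve with h1 h2
          rw [h2] at hv
          obtain ⟨hl, hc⟩ := (ih u).mp hv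
          exact ⟨by simpa using hl, fun p q hp => by simp at hp, hc⟩
        · rintro ⟨hl, _, hc⟩
          exact ⟨a, u, (ih u).mpr ⟨by simpa using hl, hc⟩, rfl⟩

lemma card_fillings [Fintype A] (w : List (Option A)) :
    (fillings w).card = Fintype.card A ^ PartialWord.holes w := by
  classical
  induction w with
  | nil => simp [fillings, PartialWord.holes]
  | cons x w ih =>
    cases x with
    | some a =>
      have : PartialWord.holes (some a :: w) = PartialWord.holes w := by
        simp [PartialWord.holes, List.countP_cons]
      rw [this, ← ih]
      simp only [fillings]
      exact Finset.card_image_of_injective _ (List.cons_injective)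
    | none =>
      have hh : PartialWord.holes (none :: w) = PartialWord.holes w + 1 := by
        simp [PartialWord.holes, List.countP_cons]
      simp only [fillings]
      rw [Finset.card_biUnion, hh]
      · simp only [Finset.card_image_of_injective _ (List.cons_injective)]
        simp [Finset.sum_const, ih, pow_succ, mul_comm]
      · intro b _ b' _ hbb
        refine Finset.disjoint_left.mpr ?_
        rintro l hl hl'
        simp only [Finset.mem_image] at hl hl'
        obtain ⟨v, _, rfl⟩ := hl
        obtain ⟨v', _, h⟩ := hl'
        injection h with h1 _
        exact hbb h1.symm

end Aux

/-- Let `A` be a finite alphabet and `w` an unbordered partial word of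
length `n` over `A` with exactly `h` holes. Then `L↑(w) = {u ∈ Aⁿ : w ↑ u}` is a
cross-bifix-free code and `|L↑(w)| = |A|^h`. -/
theorem fillings_crossBifixFree {A : Type*} [Fintype A] (n h : ℕ) (w : List (Option A))
    (hlen : w.length = n) (hw : PartialWord.Unbordered w) (hh : PartialWord.holes w = h) :
    (∀ c₁ ∈ {u : List A | u.length = n ∧ PartialWord.Compatible w (u.map some)},
      ∀ c₂ ∈ {u : List A | u.length = n ∧ PartialWord.Compatible w (u.map some)},
      ∀ x : List A, x ≠ [] → x <+: c₁ → x.length < c₁.length → ¬ x <:+ c₂) ∧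
    Set.ncard {u : List A | u.length = n ∧ PartialWord.Compatible w (u.map some)} =
      Fintype.card A ^ h := by
  classical
  constructor
  · rintro c₁ ⟨hc₁l, hc₁⟩ c₂ ⟨hc₂l, hc₂⟩ x hxne hxpre hxlt hxsuf
    have hxpos : 0 < x.length := List.length_pos_iff.mpr hxne
    have hmw : x.length < w.length := by rw [hlen, ← hc₁l]; exact hxlt
    have hlt : (w.take x.length).length = x.length := by
      rw [List.length_take]; omega
    have hld : (w.drop (w.length - x.length)).length = x.length := by
      rw [List.length_drop]; omega
    have key1 : ∀ i a, (w.take x.length).getD i none = some a → x[i]? = some a := by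
      intro i a ha
      have hi : i < x.length := by
        have := lt_of_getD_eq_some ha; omega
      rw [List.getD_eq_getElem?_getD, List.getElem?_take, if_pos hi] at ha
      have hwi : w.getD i none = some a := by
        rw [List.getD_eq_getElem?_getD]; exact ha
      have hcc : c₁[i]? = some a := compat_map_some hc₁ hwi
      obtain ⟨t, rfl⟩ := hxpre
      rwa [List.getElem?_append, if_pos hi] at hcc
    have key2 : ∀ i b, (w.drop (w.length - x.length)).getD i none = some b →
        x[i]? = some b := by
      intro i b hb
      rw [List.getD_eq_getElem?_getD, List.getElem?_drop] at hb
      have hwi : w.getD (w.length - x.length + i) none = some b := by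
        rw [List.getD_eq_getElem?_getD]; exact hb
      have hcc : c₂[w.length - x.length + i]? = some b := compat_map_some hc₂ hwi
      obtain ⟨t, rfl⟩ := hxsuf
      have ht : t.length = w.length - x.length := by
        have h2 := hc₂l
        rw [List.length_append] at h2
        omega
      rw [List.getElem?_append_right (by omega)] at hcc
      have : t.length + i - t.length = i := by omega
      rw [ht] at hcc
      have hidx : w.length - x.length + i - (w.length - x.length) = i := by omega
      rwa [hidx] at hcc
    refine hw (w.take x.length) (w.drop (w.length - x.length))
      (List.take_prefix _ _) (List.drop_suffix _ _)
      (fun hnil => by rw [hnil] at hlt; simp at hlt; omega)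
      (by omega) (by omega) ?_
    rw [compat_iff]
    refine ⟨by omega, fun i a b ha hb => ?_⟩
    have h1 := key1 i a ha
    have h2 := key2 i b hb
    rw [h1] at h2
    exact Option.some_injective _ h2
  · have hset : {u : List A | u.length = n ∧ PartialWord.Compatible w (u.map some)} =
        ↑(fillings w) := by
      ext u
      simp only [Set.mem_setOf_eq, Finset.mem_coe, mem_fillings, hlen]
    rw [hset, Set.ncard_coe_finset, card_fillings, hh]
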